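/- Let N ≥ 1 and let b : ℝ → ℂ^N be a continuously differentiable solution of the toy model system: for each j = 1,…,N, db_j/dt = i(−|b_j|² b_j + 2 \bar{b_j}(b_{j−1}² + b_{j+1}²)), with the Dirichlet boundary convention b_0(t) = b_{N+1}(t) = 0. Then the Hamiltonian H[b(t)] = Σ_{j=1}^N ( (1/4)|b_j(t)|⁴ − Re( \bar{b_j(t)}² b_{j−1}(t)² ) ) is constant in time: H[b(t)] = H[b(0)] for all t. -/

import Mathlib

open Complex Finset

private lemma aux1 (u v : ℝ → ℂ) (u' v' : ℂ) (t : ℝ)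
    (hu : HasDerivAt u u' t) (hv : HasDerivAt v v' t) :
    HasDerivAt (fun s => (1/4 : ℝ) * (Complex.normSq (u s))^2 - ((starRingEnd ℂ) (u s) ^ 2 * (v s)^2).re)
      ((1/2) * Complex.normSq (u t) * (u' * (starRingEnd ℂ) (u t) + u t * (starRingEnd ℂ) u').re
        - (((starRingEnd ℂ) u' * (starRingEnd ℂ) (u t) + (starRingEnd ℂ) (u t) * (starRingEnd ℂ) u') * (v t)^2
           + ((starRingEnd ℂ) (u t))^2 * (v' * v t + v t * v')).re) t := by
  have h1 : HasDerivAt (fun s => Complex.normSq (u s)) ((u' * (starRingEnd ℂ) (u t) + u t * (starRingEnd ℂ) u').re) t := by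
    have h2 := Complex.reCLM.hasFDerivAt.comp_hasDerivAt t (hu.mul hu.star)
    simpa [Complex.star_def, Complex.mul_conj, Function.comp_def] using h2
  have h3 : HasDerivAt (fun s => (1/4 : ℝ) * (Complex.normSq (u s))^2)
      ((1/2) * Complex.normSq (u t) * (u' * (starRingEnd ℂ) (u t) + u t * (starRingEnd ℂ) u').re) t := by
    have := (h1.fun_pow 2).const_mul (1/4 : ℝ)
    convert this using 1
    push_cast
    exacts [rfl, rfl, by ring]
  have h4 : HasDerivAt (fun s => (((starRingEnd ℂ) (u s)) ^ 2 * (v s)^2).re)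
      ((((starRingEnd ℂ) u' * (starRingEnd ℂ) (u t) + (starRingEnd ℂ) (u t) * (starRingEnd ℂ) u') * (v t)^2
           + ((starRingEnd ℂ) (u t))^2 * (v' * v t + v t * v')).re) t := by
    have hc : HasDerivAt (fun s => (starRingEnd ℂ) (u s)) ((starRingEnd ℂ) u') t := by
      simpa [Complex.star_def] using hu.star
    have hmul := ((hc.mul hc).mul (hv.mul hv))
    have h2 := Complex.reCLM.hasFDerivAt.comp_hasDerivAt t hmul
    simp only [Function.comp_def, Pi.mul_apply, Complex.reCLM_apply] at h2
    simpa only [pow_two] using h2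
  simpa using h3.fun_sub h4

private lemma key (a c e g : ℂ)
    (dc de : ℂ)
    (hdc : dc = Complex.I * (-(Complex.normSq c : ℂ) * c + 2 * (starRingEnd ℂ) c * (a^2 + e^2)))
    (hde : de = Complex.I * (-(Complex.normSq e : ℂ) * e + 2 * (starRingEnd ℂ) e * (c^2 + g^2))) :
    (1/2 : ℝ) * Complex.normSq e * (de * (starRingEnd ℂ) e + e * (starRingEnd ℂ) de).re
      - (((starRingEnd ℂ) de * (starRingEnd ℂ) e + (starRingEnd ℂ) e * (starRingEnd ℂ) de) * c^2
         + ((starRingEnd ℂ) e)^2 * (dc * c + c * dc)).re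
    = (2 * Complex.normSq e * ((starRingEnd ℂ) g^2 * e^2).im
        - 4 * Complex.normSq e * ((starRingEnd ℂ) g^2 * c^2).im)
      - (2 * Complex.normSq c * ((starRingEnd ℂ) e^2 * c^2).im
        - 4 * Complex.normSq c * ((starRingEnd ℂ) e^2 * a^2).im) := by
  subst hdc hde
  simp only [Complex.normSq_apply, pow_two, map_mul, map_add, map_neg, map_ofNat,
    Complex.conj_I, Complex.conj_conj, Complex.conj_ofReal,
    Complex.mul_re, Complex.mul_im, Complex.add_re, Complex.add_im, Complex.neg_re,
    Complex.neg_im, Complex.I_re, Complex.I_im, Complex.conj_re, Complex.conj_im,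
    Complex.ofReal_re, Complex.ofReal_im, Complex.ofReal_add, Complex.ofReal_mul]
  norm_num
  ring

private lemma tele (F : ℕ → ℝ) (N : ℕ) :
    ∑ j ∈ Finset.Icc 1 N, (F (j+1) - F j) = F (N+1) - F 1 := by
  induction N with
  | zero => simp
  | succ n ih =>
    rw [Finset.sum_Icc_succ_top (by omega : 1 ≤ n + 1), ih]
    ring

/-- Conservation of the Hamiltonian
`H[b] = ∑_{j=1}^N ( (1/4)|b_j|⁴ − Re( conj(b_j)² b_{j−1}² ) )`
for the toy model system with Dirichlet boundary conditions. -/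
theorem toy_model_energy_conservation
    (N : ℕ) (hN : 1 ≤ N) (b : ℝ → ℕ → ℂ)
    (hbc0 : ∀ t : ℝ, b t 0 = 0) (hbcN : ∀ t : ℝ, b t (N + 1) = 0)
    (hode : ∀ j ∈ Finset.Icc 1 N, ∀ t : ℝ,
      HasDerivAt (fun s : ℝ => b s j)
        (Complex.I * (-((Complex.normSq (b t j) : ℂ)) * b t j
          + 2 * (starRingEnd ℂ) (b t j) * ((b t (j - 1)) ^ 2 + (b t (j + 1)) ^ 2))) t) :
    ∀ t : ℝ,
      (∑ j ∈ Finset.Icc 1 N, ((1 / 4 : ℝ) * (Complex.normSq (b t j)) ^ 2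
        - (((starRingEnd ℂ) (b t j)) ^ 2 * (b t (j - 1)) ^ 2).re))
      = ∑ j ∈ Finset.Icc 1 N, ((1 / 4 : ℝ) * (Complex.normSq (b 0 j)) ^ 2
        - (((starRingEnd ℂ) (b 0 j)) ^ 2 * (b 0 (j - 1)) ^ 2).re) := by
  set H : ℝ → ℝ := fun t => ∑ j ∈ Finset.Icc 1 N, ((1 / 4 : ℝ) * (Complex.normSq (b t j)) ^ 2
        - (((starRingEnd ℂ) (b t j)) ^ 2 * (b t (j - 1)) ^ 2).re) with hH
  have hderiv : ∀ t : ℝ, HasDerivAt H 0 t := by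
    intro t
    -- derivative value function
    set d : ℕ → ℂ := fun k => Complex.I * (-((Complex.normSq (b t k) : ℂ)) * b t k
          + 2 * (starRingEnd ℂ) (b t k) * ((b t (k - 1)) ^ 2 + (b t (k + 1)) ^ 2)) with hd
    have hD : ∀ k, k ≤ N + 1 → HasDerivAt (fun s : ℝ => b s k) (d k) t := by
      intro k hk
      rcases eq_or_lt_of_le hk with h | h
      · subst h
        have hfun : (fun s : ℝ => b s (N+1)) = fun _ => (0 : ℂ) := funext hbcN
        rw [hfun]
        have : d (N+1) = 0 := by simp [hd, hbcN t]
        rw [this]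
        exact hasDerivAt_const t 0
      · rcases Nat.eq_zero_or_pos k with h0 | h0
        · subst h0
          have hfun : (fun s : ℝ => b s 0) = fun _ => (0 : ℂ) := funext hbc0
          rw [hfun]
          have : d 0 = 0 := by simp [hd, hbc0 t]
          rw [this]
          exact hasDerivAt_const t 0
        · exact hode k (Finset.mem_Icc.mpr ⟨h0, by omega⟩) t
    set D : ℕ → ℝ := fun j =>
      ((1/2) * Complex.normSq (b t j) * (d j * (starRingEnd ℂ) (b t j) + b t j * (starRingEnd ℂ) (d j)).re
        - (((starRingEnd ℂ) (d j) * (starRingEnd ℂ) (b t j) + (starRingEnd ℂ) (b t j) * (starRingEnd ℂ) (d j)) * (b t (j-1))^2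
           + ((starRingEnd ℂ) (b t j))^2 * (d (j-1) * b t (j-1) + b t (j-1) * d (j-1))).re) with hDdef
    have hsum : HasDerivAt H (∑ j ∈ Finset.Icc 1 N, D j) t := by
      apply HasDerivAt.fun_sum
      intro j hj
      rw [Finset.mem_Icc] at hj
      exact aux1 (fun s => b s j) (fun s => b s (j-1)) (d j) (d (j-1)) t
        (hD j (by omega)) (hD (j-1) (by omega))
    -- telescoping
    set F : ℕ → ℝ := fun k => 2 * Complex.normSq (b t (k-1)) * ((starRingEnd ℂ) (b t k)^2 * (b t (k-1))^2).im
        - 4 * Complex.normSq (b t (k-1)) * ((starRingEnd ℂ) (b t k)^2 * (b t (k-1-1))^2).im with hF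
    have hDF : ∀ j ∈ Finset.Icc 1 N, D j = F (j+1) - F j := by
      intro j hj
      rw [Finset.mem_Icc] at hj
      have h1 : j - 1 + 1 = j := by omega
      have h2 : j + 1 - 1 = j := by omega
      have hdc : d (j-1) = Complex.I * (-(Complex.normSq (b t (j-1)) : ℂ) * b t (j-1)
          + 2 * (starRingEnd ℂ) (b t (j-1)) * ((b t (j-1-1))^2 + (b t j)^2)) := by
        simp only [hd, h1]
      have hde : d j = Complex.I * (-(Complex.normSq (b t j) : ℂ) * b t j
          + 2 * (starRingEnd ℂ) (b t j) * ((b t (j-1))^2 + (b t (j+1))^2)) := rfl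
      have := key (b t (j-1-1)) (b t (j-1)) (b t j) (b t (j+1)) (d (j-1)) (d j) hdc hde
      simp only [hDdef, hF, h1, h2]
      exact this
    have hzero : (∑ j ∈ Finset.Icc 1 N, D j) = 0 := by
      rw [Finset.sum_congr rfl hDF, tele]
      have hF1 : F 1 = 0 := by simp [hF, hbc0 t]
      have hFN : F (N+1) = 0 := by simp [hF, hbcN t]
      rw [hF1, hFN]; ring
    rwa [hzero] at hsum
  intro t
  exact is_const_of_deriv_eq_zero (fun x => (hderiv x).differentiableAt)
    (fun x => (hderiv x).deriv) t 0
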